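/- For every λ ∈ ℚ with λ ≠ 0, the subspace T_- is a two-sided ideal of (ℚ⟨L⟩, ⧢_λ): for all a ∈ T_- and b ∈ ℚ⟨L⟩, both a ⧢_λ b and b ⧢_λ a lie in T_-. -/

import Mathlib

open scoped TensorProduct

/-- The two-letter alphabet `L = {d, y}`. -/
inductive Letter : Type
  | d : Letter
  | y : Letter
deriving DecidableEq

/-- `ℚ⟨L⟩`, the ℚ-vector space with basis the words on `L` (with the concatenation
product, it is the free noncommutative ℚ-algebra on `L`). -/
abbrev V : Type := MonoidAlgebra ℚ (FreeMonoid Letter)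

/-- The basis vector corresponding to a word. -/
noncomputable def wrd (w : List Letter) : V :=
  MonoidAlgebra.single (FreeMonoid.ofList w) (1 : ℚ)

/-- The shuffle-type product `⧢_λ` on basis words, defined recursively by
(P1) `e ⧢ w = w ⧢ e = w`; (P2) `(yu) ⧢ v = u ⧢ (yv) = y(u ⧢ v)`;
(P3) `(du) ⧢ (dv) = (1/λ)(d(u ⧢ v) − (du) ⧢ v − u ⧢ (dv))`. -/
noncomputable def shW (lam : ℚ) : List Letter → List Letter → V
  | [], v => wrd v
  | u@(_ :: _), [] => wrd u
  | (Letter.y :: u), v => wrd [Letter.y] * shW lam u v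
  | (Letter.d :: u), (Letter.y :: v) => wrd [Letter.y] * shW lam (Letter.d :: u) v
  | (Letter.d :: u), (Letter.d :: v) =>
      lam⁻¹ • (wrd [Letter.d] * shW lam u v
        - shW lam (Letter.d :: u) v - shW lam u (Letter.d :: v))
termination_by u v => u.length + v.length

/-- The ℚ-bilinear extension of `⧢_λ` to `ℚ⟨L⟩`. -/
noncomputable def shL (lam : ℚ) : V →ₗ[ℚ] V →ₗ[ℚ] V :=
  (Finsupp.lsum ℚ fun u => LinearMap.toSpanSingleton ℚ (V →ₗ[ℚ] V)
    ((Finsupp.lsum ℚ fun v =>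
      LinearMap.toSpanSingleton ℚ V (shW lam (FreeMonoid.toList u) (FreeMonoid.toList v)))
      ∘ₗ (MonoidAlgebra.coeffLinearEquiv ℚ).toLinearMap))
    ∘ₗ (MonoidAlgebra.coeffLinearEquiv ℚ).toLinearMap

/-- `T₋ ⊆ ℚ⟨L⟩`: the span of the words ending in the letter `d`. -/
noncomputable def Tneg : Submodule ℚ V :=
  Submodule.span ℚ {x : V | ∃ w : List Letter, x = wrd (w ++ [Letter.d])}

/-! ### Auxiliary material -/

/-- A word ends in the letter `d`. -/
def EndsD (w : List Letter) : Prop := ∃ w', w = w' ++ [Letter.d]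

lemma not_endsD_nil : ¬ EndsD [] := by
  rintro ⟨w', hw⟩
  simpa using congrArg List.length hw

lemma endsD_cons {c : Letter} {u : List Letter} (h : EndsD (c :: u)) :
    (u = [] ∧ c = Letter.d) ∨ EndsD u := by
  obtain ⟨w, hw⟩ := h
  cases w with
  | nil =>
    simp only [List.nil_append, List.cons.injEq] at hw
    exact Or.inl ⟨hw.2, hw.1⟩
  | cons c' w' =>
    simp only [List.cons_append, List.cons.injEq] at hw
    exact Or.inr ⟨w', hw.2⟩

lemma endsD_cons_of {u : List Letter} (c : Letter) (h : EndsD u) : EndsD (c :: u) := by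
  obtain ⟨w, hw⟩ := h
  exact ⟨c :: w, by simp [hw]⟩

lemma endsD_of_y_cons {u : List Letter} (h : EndsD (Letter.y :: u)) : EndsD u := by
  rcases endsD_cons h with ⟨_, h2⟩ | h2
  · exact absurd h2 (by simp)
  · exact h2

lemma endsD_d_singleton : EndsD [Letter.d] := ⟨[], rfl⟩

lemma endsD_of_cons_cons {c c' : Letter} {u : List Letter} (h : EndsD (c :: c' :: u)) :
    EndsD (c' :: u) := by
  rcases endsD_cons h with ⟨h1, _⟩ | h1
  · exact absurd h1 (by simp)
  · exact h1

lemma wrd_mul (u v : List Letter) : wrd u * wrd v = wrd (u ++ v) := by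
  simp [wrd, MonoidAlgebra.single_mul_single]

lemma wrd_mem_Tneg {w : List Letter} (h : EndsD w) : wrd w ∈ Tneg := by
  obtain ⟨w', hw⟩ := h
  exact Submodule.subset_span ⟨w', by rw [hw]⟩

lemma wrd_mul_mem_Tneg (c : List Letter) {t : V} (ht : t ∈ Tneg) : wrd c * t ∈ Tneg := by
  induction ht using Submodule.span_induction with
  | mem x hx =>
    obtain ⟨w, rfl⟩ := hx
    rw [wrd_mul]
    exact wrd_mem_Tneg ⟨c ++ w, by simp⟩
  | zero => simpa using zero_mem Tneg
  | add x y hx hy ihx ihy => rw [mul_add]; exact add_mem ihx ihy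
  | smul r x hx ihx => rw [mul_smul_comm]; exact Submodule.smul_mem _ _ ihx

/-- The key lemma: if `u` or `v` ends in `d`, then `shW lam u v ∈ T₋`. -/
lemma shW_mem_Tneg (lam : ℚ) :
    ∀ n (u v : List Letter), u.length + v.length = n →
      (EndsD u ∨ EndsD v) → shW lam u v ∈ Tneg := by
  intro n
  induction n using Nat.strong_induction_on with
  | _ n IH =>
    intro u v hn H
    subst hn
    match u, v with
    | [], v =>
      have hv : EndsD v := H.resolve_left not_endsD_nil
      rw [shW]
      exact wrd_mem_Tneg hv
    | (c :: u), [] =>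
      have hu : EndsD (c :: u) := H.resolve_right not_endsD_nil
      rw [shW]
      exact wrd_mem_Tneg hu
    | (Letter.y :: u), (c :: v) =>
      have H' : EndsD u ∨ EndsD (c :: v) := by
        rcases H with h | h
        · rcases endsD_cons h with ⟨_, h2⟩ | h2
          · exact absurd h2 (by simp)
          · exact Or.inl h2
        · exact Or.inr h
      have hrec : shW lam u (c :: v) ∈ Tneg :=
        IH (u.length + (c :: v).length)
          (by simp only [List.length_cons]; omega) u (c :: v) rfl H'
      rw [shW]
      · exact wrd_mul_mem_Tneg [Letter.y] hrec
      · simp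
    | (Letter.d :: u), (Letter.y :: v) =>
      have H' : EndsD (Letter.d :: u) ∨ EndsD v := by
        rcases H with h | h
        · exact Or.inl h
        · exact Or.inr (endsD_of_y_cons h)
      have hrec : shW lam (Letter.d :: u) v ∈ Tneg :=
        IH ((Letter.d :: u).length + v.length)
          (by simp only [List.length_cons]; omega) _ _ rfl H'
      rw [shW]
      exact wrd_mul_mem_Tneg [Letter.y] hrec
    | (Letter.d :: u), (Letter.d :: v) =>
      rw [shW]
      match u, v with
      | [], [] =>
        refine Submodule.smul_mem _ _ (sub_mem (sub_mem ?_ ?_) ?_) <;>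
          rw [shW] <;>
          first
          | (rw [show wrd [Letter.d] * wrd [] = wrd [Letter.d] from wrd_mul _ _];
             exact wrd_mem_Tneg endsD_d_singleton)
          | exact wrd_mem_Tneg endsD_d_singleton
      | [], (c :: v) =>
        have hrec : shW lam [Letter.d] (c :: v) ∈ Tneg :=
          IH ([Letter.d].length + (c :: v).length)
            (by simp only [List.length_cons, List.length_nil]; omega) _ _ rfl
            (Or.inl endsD_d_singleton)
        have e1 : shW lam ([] : List Letter) (c :: v) = wrd (c :: v) := by rw [shW]
        have e2 : shW lam ([] : List Letter) (Letter.d :: c :: v) = wrd (Letter.d :: c :: v) := by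
          rw [shW]
        rw [e1, e2, wrd_mul]
        simp only [List.singleton_append]
        rw [sub_sub_cancel_left]
        exact Submodule.smul_mem _ _ (neg_mem hrec)
      | (c :: u), [] =>
        have hrec : shW lam (c :: u) [Letter.d] ∈ Tneg :=
          IH ((c :: u).length + [Letter.d].length)
            (by simp only [List.length_cons, List.length_nil]; omega) _ _ rfl
            (Or.inr endsD_d_singleton)
        have e1 : shW lam (c :: u) [] = wrd (c :: u) := by rw [shW]
        have e2 : shW lam (Letter.d :: c :: u) [] = wrd (Letter.d :: c :: u) := by rw [shW]
        rw [e1, e2, wrd_mul]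
        simp only [List.singleton_append]
        rw [sub_self, zero_sub]
        exact Submodule.smul_mem _ _ (neg_mem hrec)
      | (c :: u), (c' :: v) =>
        have H' : EndsD (c :: u) ∨ EndsD (c' :: v) := by
          rcases H with h | h
          · exact Or.inl (endsD_of_cons_cons h)
          · exact Or.inr (endsD_of_cons_cons h)
        have h1 : shW lam (c :: u) (c' :: v) ∈ Tneg :=
          IH ((c :: u).length + (c' :: v).length)
            (by simp only [List.length_cons]; omega) _ _ rfl H'
        have h2 : shW lam (Letter.d :: c :: u) (c' :: v) ∈ Tneg :=
          IH ((Letter.d :: c :: u).length + (c' :: v).length)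
            (by simp only [List.length_cons]; omega) _ _ rfl
            (H'.imp (endsD_cons_of _) id)
        have h3 : shW lam (c :: u) (Letter.d :: c' :: v) ∈ Tneg :=
          IH ((c :: u).length + (Letter.d :: c' :: v).length)
            (by simp only [List.length_cons]; omega) _ _ rfl
            (H'.imp id (endsD_cons_of _))
        exact Submodule.smul_mem _ _
          (sub_mem (sub_mem (wrd_mul_mem_Tneg [Letter.d] h1) h2) h3)

lemma mem_span_wrd (x : V) : x ∈ Submodule.span ℚ {y : V | ∃ w, y = wrd w} := by
  induction x using MonoidAlgebra.induction with
  | zero => exact zero_mem _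
  | single_add a r f _ _ ih =>
    refine add_mem ?_ ih
    have h : (MonoidAlgebra.single a r : V) = r • wrd a.toList := by
      simp [wrd, MonoidAlgebra.smul_single']
    rw [h]
    exact Submodule.smul_mem _ _ (Submodule.subset_span ⟨a.toList, rfl⟩)

lemma shL_wrd (lam : ℚ) (u v : List Letter) : shL lam (wrd u) (wrd v) = shW lam u v := by
  rw [shL, wrd, wrd]
  simp only [LinearMap.comp_apply, LinearEquiv.coe_coe, MonoidAlgebra.coeffLinearEquiv_apply,
    MonoidAlgebra.coeff_single]
  erw [Finsupp.lsum_single, LinearMap.toSpanSingleton_apply_one]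
  simp only [LinearMap.comp_apply, LinearEquiv.coe_coe, MonoidAlgebra.coeffLinearEquiv_apply,
    MonoidAlgebra.coeff_single]
  erw [Finsupp.lsum_single, LinearMap.toSpanSingleton_apply_one]
  rw [FreeMonoid.toList_ofList, FreeMonoid.toList_ofList]

/-- For `λ ≠ 0`, the subspace `T₋` is a two-sided ideal of `(ℚ⟨L⟩, ⧢_λ)`. -/
theorem stmt_9 (lam : ℚ) (hlam : lam ≠ 0) (a : V) (ha : a ∈ Tneg) (b : V) :
    shL lam a b ∈ Tneg ∧ shL lam b a ∈ Tneg := by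
  constructor
  · induction ha using Submodule.span_induction with
    | mem x hx =>
      obtain ⟨w, rfl⟩ := hx
      induction mem_span_wrd b using Submodule.span_induction with
      | mem y hy =>
        obtain ⟨v, rfl⟩ := hy
        rw [shL_wrd]
        exact shW_mem_Tneg lam _ _ _ rfl (Or.inl ⟨w, rfl⟩)
      | zero => simp only [map_zero]; exact zero_mem _
      | add y z hy hz ihy ihz => simp only [map_add]; exact add_mem ihy ihz
      | smul r y hy ihy => simp only [map_smul]; exact Submodule.smul_mem _ _ ihy
    | zero => simp only [map_zero, LinearMap.zero_apply]; exact zero_mem _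
    | add x y hx hy ihx ihy =>
      simp only [map_add, LinearMap.add_apply]; exact add_mem ihx ihy
    | smul r x hx ihx =>
      simp only [map_smul, LinearMap.smul_apply]; exact Submodule.smul_mem _ _ ihx
  · induction ha using Submodule.span_induction with
    | mem x hx =>
      obtain ⟨w, rfl⟩ := hx
      induction mem_span_wrd b using Submodule.span_induction with
      | mem y hy =>
        obtain ⟨v, rfl⟩ := hy
        rw [shL_wrd]
        exact shW_mem_Tneg lam _ _ _ rfl (Or.inr ⟨w, rfl⟩)
      | zero => simp only [map_zero, LinearMap.zero_apply]; exact zero_mem _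
      | add y z hy hz ihy ihz =>
        simp only [map_add, LinearMap.add_apply]; exact add_mem ihy ihz
      | smul r y hy ihy =>
        simp only [map_smul, LinearMap.smul_apply]; exact Submodule.smul_mem _ _ ihy
    | zero => simp only [map_zero]; exact zero_mem _
    | add x y hx hy ihx ihy => simp only [map_add]; exact add_mem ihx ihy
    | smul r x hx ihx => simp only [map_smul]; exact Submodule.smul_mem _ _ ihx
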